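/- In the Varchenko–Gelfand presentation for the braid arrangement A(S_n), the ideal I generated by e_{ij}² for all i < j and by e_{ij}e_{jk} − e_{ij}e_{ik} − e_{jk}e_{ik} for all i < j < k, has the property that the quotient ring ℝ[e_{ij}]/I has dimension n! as an ℝ-vector space, with basis given by products of one element from each of the sets {1, e_{12}}, {1, e_{13}, e_{23}}, ..., {1, e_{1n}, ..., e_{(n−1)n}}. -/

import Mathlib

open MvPolynomial

noncomputable section

/-- index set for the hyperplanes `H_{ij}`, `i < j`, of the braid arrangement -/
abbrev BraidIdx (n : ℕ) := {p : Fin n × Fin n // p.1 < p.2}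

/-- the variable `e_{ij}` attached to `i < j` given by `i : Fin j.val` -/
def braidVar {n : ℕ} (j : Fin n) (i : Fin j.val) : BraidIdx n :=
  ⟨(⟨i.val, lt_trans i.isLt j.isLt⟩, j), i.isLt⟩

/-- the Varchenko–Gelfand ideal of the braid arrangement `A(Sₙ)`:
generated by `e_{ij}²` and `e_{ij}e_{jk} − e_{ij}e_{ik} − e_{jk}e_{ik}` -/
def braidVGIdeal (n : ℕ) : Ideal (MvPolynomial (BraidIdx n) ℝ) :=
  Ideal.span
    ({q | ∃ p : BraidIdx n, q = X p ^ 2} ∪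
     {q | ∃ (i j k : Fin n) (hij : i < j) (hjk : j < k),
        q = X (⟨(i, j), hij⟩ : BraidIdx n) * X (⟨(j, k), hjk⟩ : BraidIdx n)
          - X (⟨(i, j), hij⟩ : BraidIdx n) * X (⟨(i, k), lt_trans hij hjk⟩ : BraidIdx n)
          - X (⟨(j, k), hjk⟩ : BraidIdx n) * X (⟨(i, k), lt_trans hij hjk⟩ : BraidIdx n)})

/-- the nbc-monomials: one factor (`1` or some `e_{ij}`) from each column `j` -/
def nbcFam (n : ℕ) : ((j : Fin n) → Option (Fin j.val)) →
    MvPolynomial (BraidIdx n) ℝ ⧸ braidVGIdeal n :=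
  fun f => Ideal.Quotient.mk (braidVGIdeal n)
    (∏ j : Fin n, (match f j with
      | none => 1
      | some i => X (braidVar j i)))

namespace BraidVG

variable (n : ℕ)

abbrev E (n : ℕ) := MvPolynomial (BraidIdx n) ℝ
abbrev A (n : ℕ) := Equiv.Perm (Fin n) → ℝ

/-- characteristic function of the inversion `(i,j)` -/
def xs : BraidIdx n → A n := fun p w => if w p.1.2 < w p.1.1 then 1 else 0

def piA : E n →ₐ[ℝ] A n := aeval (xs n)

def piT : E n →ₐ[ℝ] Polynomial (A n) :=
  aeval (fun p => Polynomial.C (xs n p) * Polynomial.X)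

def mon : Multiset (BraidIdx n) → E n := fun s => (s.map X).prod

def nbcBase : ((j : Fin n) → Option (Fin j.val)) → E n := fun f =>
  ∏ j : Fin n, (match f j with
      | none => 1
      | some i => X (braidVar j i))

def fMs (f : (j : Fin n) → Option (Fin j.val)) : Multiset (BraidIdx n) :=
  ∑ j : Fin n, (match f j with
      | none => (0 : Multiset (BraidIdx n))
      | some i => {braidVar j i})

def wt (s : Multiset (BraidIdx n)) : ℕ := (s.map fun p => n + p.1.2.val + 1).sum

def uu (f : (j : Fin n) → Option (Fin j.val)) : A n := piA n (nbcBase n f)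

def NN (d : ℕ) : Submodule ℝ (A n) :=
  Submodule.span ℝ (uu n '' {f | Multiset.card (fMs n f) ≤ d})

@[simp] lemma mon_zero : mon n 0 = 1 := by simp [mon]

@[simp] lemma mon_cons (p : BraidIdx n) (s : Multiset (BraidIdx n)) :
    mon n (p ::ₘ s) = X p * mon n s := by simp [mon]

lemma mon_add (s t : Multiset (BraidIdx n)) : mon n (s + t) = mon n s * mon n t := by
  simp [mon]

@[simp] lemma mon_singleton (p : BraidIdx n) : mon n {p} = X p := by simp [mon]

@[simp] lemma piA_X (p : BraidIdx n) : piA n (X p) = xs n p := aeval_X _ _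

lemma wt_cons (p : BraidIdx n) (s : Multiset (BraidIdx n)) :
    wt n (p ::ₘ s) = n + p.1.2.val + 1 + wt n s := by simp [wt]

lemma NN_mono {d d' : ℕ} (h : d ≤ d') : NN n d ≤ NN n d' :=
  Submodule.span_mono (Set.image_mono fun f hf => le_trans hf h)

lemma xs_idem (p : BraidIdx n) : xs n p * xs n p = xs n p := by
  funext w; simp only [xs, Pi.mul_apply]; split_ifs <;> norm_num

lemma xs_rel {i j k : Fin n} (hij : i < j) (hjk : j < k) :
    xs n ⟨(i, j), hij⟩ * xs n ⟨(j, k), hjk⟩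
      - xs n ⟨(i, j), hij⟩ * xs n ⟨(i, k), lt_trans hij hjk⟩
      - xs n ⟨(j, k), hjk⟩ * xs n ⟨(i, k), lt_trans hij hjk⟩
      = - xs n ⟨(i, k), lt_trans hij hjk⟩ := by
  funext w
  simp only [xs, Pi.mul_apply, Pi.sub_apply, Pi.neg_apply]
  split_ifs <;> try norm_num
  · exact absurd (‹w k < w j›.trans ‹w j < w i›) ‹¬ w k < w i›
  · exact absurd ‹w k < w i› (not_lt.mpr (le_trans (le_of_not_gt ‹¬ w j < w i›)
      (le_of_not_gt ‹¬ w k < w j›)))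

lemma xs_rel2 {i j k : Fin n} (hij : i < j) (hjk : j < k) :
    xs n ⟨(i, k), lt_trans hij hjk⟩ * xs n ⟨(j, k), hjk⟩
      = xs n ⟨(i, j), hij⟩ * xs n ⟨(j, k), hjk⟩
        - xs n ⟨(i, j), hij⟩ * xs n ⟨(i, k), lt_trans hij hjk⟩
        + xs n ⟨(i, k), lt_trans hij hjk⟩ := by
  have h := xs_rel n hij hjk
  linear_combination -h


lemma braidVar_eta (r : BraidIdx n) : braidVar r.1.2 ⟨r.1.1.val, r.2⟩ = r := by
  rcases r with ⟨⟨i, j⟩, h⟩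
  simp [braidVar]

@[simp] lemma braidVar_top (j : Fin n) (i : Fin j.val) : (braidVar j i).1.2 = j := rfl

lemma mon_toMultiset (σ : BraidIdx n →₀ ℕ) :
    mon n σ.toMultiset = monomial σ 1 := by
  induction σ using Finsupp.induction with
  | zero => simp [Finsupp.toMultiset_zero]
  | single_add a k τ ha hk ih =>
      rw [Finsupp.toMultiset_add, mon_add, Finsupp.toMultiset_single, ih,
        monomial_single_add]
      congr 1
      rw [show (k • ({a} : Multiset (BraidIdx n))) = Multiset.replicate k a by
        simp [Multiset.nsmul_singleton]]
      simp [mon, Multiset.map_replicate, Multiset.prod_replicate]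

lemma mon_sum {ι : Type*} (F : Finset ι) (g : ι → Multiset (BraidIdx n)) :
    mon n (∑ j ∈ F, g j) = ∏ j ∈ F, mon n (g j) := by
  classical
  induction F using Finset.induction with
  | empty => simp
  | insert _ _ hx ih => rw [Finset.sum_insert hx, Finset.prod_insert hx, mon_add, ih]

lemma mon_fMs (f : (j : Fin n) → Option (Fin j.val)) :
    mon n (fMs n f) = nbcBase n f := by
  rw [fMs, mon_sum, nbcBase]
  refine Finset.prod_congr rfl fun j _ => ?_
  cases f j <;> simp

lemma exists_nbc (s : Multiset (BraidIdx n)) (hnd : s.Nodup)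
    (hinj : ∀ p ∈ s, ∀ q ∈ s, p.1.2 = q.1.2 → p = q) :
    ∃ f : (j : Fin n) → Option (Fin j.val), s = fMs n f := by
  classical
  refine ⟨fun j => if h : ∃ i : Fin j.val, braidVar j i ∈ s then some h.choose else none, ?_⟩
  ext r
  rw [fMs, Multiset.count_sum']
  rw [Finset.sum_eq_single r.1.2]
  · by_cases hex : ∃ i : Fin r.1.2.val, braidVar r.1.2 i ∈ s
    · rw [dif_pos hex]
      have hc := hex.choose_spec
      by_cases hm : r ∈ s
      · have : braidVar r.1.2 hex.choose = r := hinj _ hc _ hm rfl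
        simp [this, Multiset.count_singleton, Multiset.count_eq_one_of_mem hnd hm]
      · rw [Multiset.count_eq_zero_of_notMem hm]
        simp only [Multiset.count_singleton]
        rw [if_neg]
        intro h
        exact hm (h ▸ hc)
    · rw [dif_neg hex]
      rw [Multiset.count_eq_zero_of_notMem fun hm => hex ⟨⟨r.1.1.val, r.2⟩,
        by rwa [braidVar_eta]⟩]
      rfl
  · intro j _ hj
    by_cases hex : ∃ i : Fin j.val, braidVar j i ∈ s
    · rw [dif_pos hex]
      simp only [Multiset.count_singleton]
      rw [if_neg]
      intro h
      exact hj (by rw [h]; rfl)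
    · rw [dif_neg hex]
      rfl
  · simp

lemma piT_mon (s : Multiset (BraidIdx n)) :
    piT n (mon n s) = Polynomial.C (piA n (mon n s)) * Polynomial.X ^ Multiset.card s := by
  induction s using Multiset.induction with
  | empty => simp
  | cons p t ih =>
      rw [mon_cons, map_mul, map_mul, ih, piA_X]
      rw [show piT n (X p) = Polynomial.C (xs n p) * Polynomial.X from aeval_X _ _]
      rw [Multiset.card_cons, Polynomial.C_mul]
      ring

/-- straightening step for a square, in `A` -/
lemma stepA_sq (p : BraidIdx n) (t : Multiset (BraidIdx n)) :
    piA n (mon n (p ::ₘ p ::ₘ t)) = piA n (mon n (p ::ₘ t)) := by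
  simp only [mon_cons, map_mul, piA_X, ← mul_assoc, xs_idem]

/-- straightening step for two edges with the same top, in `A` -/
lemma stepA_mix {i j k : Fin n} (hij : i < j) (hjk : j < k) (t : Multiset (BraidIdx n)) :
    piA n (mon n (⟨(i, k), lt_trans hij hjk⟩ ::ₘ ⟨(j, k), hjk⟩ ::ₘ t))
      = piA n (mon n (⟨(i, j), hij⟩ ::ₘ ⟨(j, k), hjk⟩ ::ₘ t))
        - piA n (mon n (⟨(i, j), hij⟩ ::ₘ ⟨(i, k), lt_trans hij hjk⟩ ::ₘ t))
        + piA n (mon n (⟨(i, k), lt_trans hij hjk⟩ ::ₘ t)) := by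
  simp only [mon_cons, map_mul, piA_X]
  have h := xs_rel2 n hij hjk
  linear_combination (piA n (mon n t)) * h

lemma memA (s : Multiset (BraidIdx n)) :
    piA n (mon n s) ∈ NN n (Multiset.card s) := by
  classical
  suffices h : ∀ N : ℕ, ∀ s : Multiset (BraidIdx n), wt n s < N →
      piA n (mon n s) ∈ NN n (Multiset.card s) from h (wt n s + 1) s (Nat.lt_succ_self _)
  intro N
  induction N with
  | zero => exact fun s h => absurd h (Nat.not_lt_zero _)
  | succ N ih =>
    intro s hs
    by_cases h1 : ∃ p : BraidIdx n, 2 ≤ s.count p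
    · obtain ⟨p, hp⟩ := h1
      have hps : p ∈ s := by rw [← Multiset.count_pos]; omega
      obtain ⟨s₁, rfl⟩ := Multiset.exists_cons_of_mem hps
      have hps₁ : p ∈ s₁ := by
        rw [← Multiset.count_pos]
        have := Multiset.count_cons_self p s₁
        omega
      obtain ⟨t, rfl⟩ := Multiset.exists_cons_of_mem hps₁
      rw [stepA_sq]
      have hwt : wt n (p ::ₘ t) < N := by
        have h2 := wt_cons n p (p ::ₘ t)
        have h3 := wt_cons n p t
        omega
      refine NN_mono n ?_ (ih _ hwt)
      simp
    · by_cases h2 : ∃ p q : BraidIdx n, p ∈ s ∧ q ∈ s ∧ p ≠ q ∧ p.1.2 = q.1.2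
      · obtain ⟨p, q, hp, hq, hne, htop⟩ := h2
        -- extract i < j < k
        have hfst : p.1.1 ≠ q.1.1 := by
          intro h
          exact hne (Subtype.ext (Prod.ext h htop))
        -- symmetric helper
        have main : ∀ (i j k : Fin n) (hij : i < j) (hjk : j < k),
            (⟨(i, k), lt_trans hij hjk⟩ : BraidIdx n) ∈ s →
            (⟨(j, k), hjk⟩ : BraidIdx n) ∈ s →
            piA n (mon n s) ∈ NN n (Multiset.card s) := by
          intro i j k hij hjk hik hjks
          have hne' : (⟨(j, k), hjk⟩ : BraidIdx n) ≠ ⟨(i, k), lt_trans hij hjk⟩ := by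
            intro h
            exact absurd (congrArg (fun r => r.1.1) h) (ne_of_gt hij)
          obtain ⟨s₁, rfl⟩ := Multiset.exists_cons_of_mem hik
          have : (⟨(j, k), hjk⟩ : BraidIdx n) ∈ s₁ :=
            (Multiset.mem_cons.mp hjks).resolve_left hne'
          obtain ⟨t, rfl⟩ := Multiset.exists_cons_of_mem this
          rw [stepA_mix n hij hjk]
          have hjk' : j.val < k.val := hjk
          have hw1 : wt n ((⟨(i, k), lt_trans hij hjk⟩ : BraidIdx n) ::ₘ
              (⟨(j, k), hjk⟩ : BraidIdx n) ::ₘ t) = n + k.val + 1 +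
              wt n ((⟨(j, k), hjk⟩ : BraidIdx n) ::ₘ t) := wt_cons n _ _
          have hw2 : wt n ((⟨(j, k), hjk⟩ : BraidIdx n) ::ₘ t) = n + k.val + 1 + wt n t :=
            wt_cons n _ _
          have m1 : piA n (mon n ((⟨(i, j), hij⟩ : BraidIdx n) ::ₘ ⟨(j, k), hjk⟩ ::ₘ t))
              ∈ NN n (Multiset.card ((⟨(i, k), lt_trans hij hjk⟩ : BraidIdx n) ::ₘ
                ⟨(j, k), hjk⟩ ::ₘ t)) := by
            have hw : wt n ((⟨(i, j), hij⟩ : BraidIdx n) ::ₘ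
                (⟨(j, k), hjk⟩ : BraidIdx n) ::ₘ t) = n + j.val + 1 +
                wt n ((⟨(j, k), hjk⟩ : BraidIdx n) ::ₘ t) := wt_cons n _ _
            have := ih ((⟨(i, j), hij⟩ : BraidIdx n) ::ₘ ⟨(j, k), hjk⟩ ::ₘ t) (by omega)
            simpa using this
          have m2 : piA n (mon n ((⟨(i, j), hij⟩ : BraidIdx n) ::ₘ
              ⟨(i, k), lt_trans hij hjk⟩ ::ₘ t))
              ∈ NN n (Multiset.card ((⟨(i, k), lt_trans hij hjk⟩ : BraidIdx n) ::ₘ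
                ⟨(j, k), hjk⟩ ::ₘ t)) := by
            have hw : wt n ((⟨(i, j), hij⟩ : BraidIdx n) ::ₘ
                (⟨(i, k), lt_trans hij hjk⟩ : BraidIdx n) ::ₘ t) = n + j.val + 1 +
                wt n ((⟨(i, k), lt_trans hij hjk⟩ : BraidIdx n) ::ₘ t) := wt_cons n _ _
            have hw' : wt n ((⟨(i, k), lt_trans hij hjk⟩ : BraidIdx n) ::ₘ t)
                = n + k.val + 1 + wt n t := wt_cons n _ _
            have := ih ((⟨(i, j), hij⟩ : BraidIdx n) ::ₘ
              ⟨(i, k), lt_trans hij hjk⟩ ::ₘ t) (by omega)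
            simpa using this
          have m3 : piA n (mon n ((⟨(i, k), lt_trans hij hjk⟩ : BraidIdx n) ::ₘ t))
              ∈ NN n (Multiset.card ((⟨(i, k), lt_trans hij hjk⟩ : BraidIdx n) ::ₘ
                ⟨(j, k), hjk⟩ ::ₘ t)) := by
            have hw' : wt n ((⟨(i, k), lt_trans hij hjk⟩ : BraidIdx n) ::ₘ t)
                = n + k.val + 1 + wt n t := wt_cons n _ _
            refine NN_mono n ?_ (ih _ (by omega))
            simp
          exact add_mem (sub_mem m1 m2) m3
        rcases lt_or_gt_of_ne hfst with hlt | hlt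
        · have hpk : p.1.1 < p.1.2 := p.2
          have : p = ⟨(p.1.1, p.1.2), p.2⟩ := rfl
          exact main p.1.1 q.1.1 p.1.2 hlt (htop ▸ q.2)
            (by convert hp using 2) (by convert hq using 2 <;> rw [htop])
        · exact main q.1.1 p.1.1 p.1.2 hlt p.2
            (by convert hq using 2 <;> rw [htop]) (by convert hp using 2)
      · push_neg at h1 h2
        have hnd : s.Nodup := Multiset.nodup_iff_count_le_one.mpr fun p => by
          have := h1 p; omega
        obtain ⟨f, rfl⟩ := exists_nbc n s hnd fun p hp q hq ht =>
          by_contra fun hne => (h2 p q hp hq hne) ht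
        rw [mon_fMs]
        exact Submodule.subset_span ⟨f, show Multiset.card (fMs n f) ≤ Multiset.card (fMs n f) from le_rfl, rfl⟩

abbrev mkQ (n : ℕ) := Ideal.Quotient.mk (braidVGIdeal n)

lemma sq_mem (p : BraidIdx n) : (X p ^ 2 : E n) ∈ braidVGIdeal n :=
  Ideal.subset_span (Or.inl ⟨p, rfl⟩)

lemma mix_mem {i j k : Fin n} (hij : i < j) (hjk : j < k) :
    (X (⟨(i, j), hij⟩ : BraidIdx n) * X (⟨(j, k), hjk⟩ : BraidIdx n)
      - X (⟨(i, j), hij⟩ : BraidIdx n) * X (⟨(i, k), lt_trans hij hjk⟩ : BraidIdx n)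
      - X (⟨(j, k), hjk⟩ : BraidIdx n) * X (⟨(i, k), lt_trans hij hjk⟩ : BraidIdx n) : E n)
      ∈ braidVGIdeal n :=
  Ideal.subset_span (Or.inr ⟨i, j, k, hij, hjk, rfl⟩)

lemma stepQ_sq (p : BraidIdx n) (t : Multiset (BraidIdx n)) :
    mkQ n (mon n (p ::ₘ p ::ₘ t)) = 0 := by
  rw [Ideal.Quotient.eq_zero_iff_mem]
  have : mon n (p ::ₘ p ::ₘ t) = X p ^ 2 * mon n t := by
    simp only [mon_cons]; ring
  rw [this]
  exact Ideal.mul_mem_right _ _ (sq_mem n p)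

lemma stepQ_mix {i j k : Fin n} (hij : i < j) (hjk : j < k) (t : Multiset (BraidIdx n)) :
    mkQ n (mon n (⟨(i, k), lt_trans hij hjk⟩ ::ₘ ⟨(j, k), hjk⟩ ::ₘ t))
      = mkQ n (mon n (⟨(i, j), hij⟩ ::ₘ ⟨(j, k), hjk⟩ ::ₘ t))
        - mkQ n (mon n (⟨(i, j), hij⟩ ::ₘ ⟨(i, k), lt_trans hij hjk⟩ ::ₘ t)) := by
  rw [← sub_eq_zero, ← map_sub, ← map_sub, Ideal.Quotient.eq_zero_iff_mem]
  have : mon n (⟨(i, k), lt_trans hij hjk⟩ ::ₘ ⟨(j, k), hjk⟩ ::ₘ t)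
      - (mon n (⟨(i, j), hij⟩ ::ₘ ⟨(j, k), hjk⟩ ::ₘ t)
        - mon n (⟨(i, j), hij⟩ ::ₘ ⟨(i, k), lt_trans hij hjk⟩ ::ₘ t))
      = -((X (⟨(i, j), hij⟩ : BraidIdx n) * X (⟨(j, k), hjk⟩ : BraidIdx n)
          - X (⟨(i, j), hij⟩ : BraidIdx n) * X (⟨(i, k), lt_trans hij hjk⟩ : BraidIdx n)
          - X (⟨(j, k), hjk⟩ : BraidIdx n) * X (⟨(i, k), lt_trans hij hjk⟩ : BraidIdx n))
          * mon n t) := by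
    simp only [mon_cons]; ring
  rw [this]
  exact neg_mem (Ideal.mul_mem_right _ _ (mix_mem n hij hjk))

lemma memQ (s : Multiset (BraidIdx n)) :
    mkQ n (mon n s) ∈ Submodule.span ℝ (Set.range (nbcFam n)) := by
  classical
  suffices h : ∀ N : ℕ, ∀ s : Multiset (BraidIdx n), wt n s < N →
      mkQ n (mon n s) ∈ Submodule.span ℝ (Set.range (nbcFam n)) from
    h (wt n s + 1) s (Nat.lt_succ_self _)
  intro N
  induction N with
  | zero => exact fun s h => absurd h (Nat.not_lt_zero _)
  | succ N ih =>
    intro s hs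
    by_cases h1 : ∃ p : BraidIdx n, 2 ≤ s.count p
    · obtain ⟨p, hp⟩ := h1
      have hps : p ∈ s := by rw [← Multiset.count_pos]; omega
      obtain ⟨s₁, rfl⟩ := Multiset.exists_cons_of_mem hps
      have hps₁ : p ∈ s₁ := by
        rw [← Multiset.count_pos]
        have := Multiset.count_cons_self p s₁
        omega
      obtain ⟨t, rfl⟩ := Multiset.exists_cons_of_mem hps₁
      rw [stepQ_sq]
      exact zero_mem _
    · by_cases h2 : ∃ p q : BraidIdx n, p ∈ s ∧ q ∈ s ∧ p ≠ q ∧ p.1.2 = q.1.2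
      · obtain ⟨p, q, hp, hq, hne, htop⟩ := h2
        have hfst : p.1.1 ≠ q.1.1 := by
          intro h
          exact hne (Subtype.ext (Prod.ext h htop))
        have main : ∀ (i j k : Fin n) (hij : i < j) (hjk : j < k),
            (⟨(i, k), lt_trans hij hjk⟩ : BraidIdx n) ∈ s →
            (⟨(j, k), hjk⟩ : BraidIdx n) ∈ s →
            mkQ n (mon n s) ∈ Submodule.span ℝ (Set.range (nbcFam n)) := by
          intro i j k hij hjk hik hjks
          have hne' : (⟨(j, k), hjk⟩ : BraidIdx n) ≠ ⟨(i, k), lt_trans hij hjk⟩ := by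
            intro h
            exact absurd (congrArg (fun r => r.1.1) h) (ne_of_gt hij)
          obtain ⟨s₁, rfl⟩ := Multiset.exists_cons_of_mem hik
          have : (⟨(j, k), hjk⟩ : BraidIdx n) ∈ s₁ :=
            (Multiset.mem_cons.mp hjks).resolve_left hne'
          obtain ⟨t, rfl⟩ := Multiset.exists_cons_of_mem this
          rw [stepQ_mix n hij hjk]
          have hjk' : j.val < k.val := hjk
          have hw1 : wt n ((⟨(i, k), lt_trans hij hjk⟩ : BraidIdx n) ::ₘ
              (⟨(j, k), hjk⟩ : BraidIdx n) ::ₘ t) = n + k.val + 1 +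
              wt n ((⟨(j, k), hjk⟩ : BraidIdx n) ::ₘ t) := wt_cons n _ _
          have hw2 : wt n ((⟨(j, k), hjk⟩ : BraidIdx n) ::ₘ t) = n + k.val + 1 + wt n t :=
            wt_cons n _ _
          have m1 := ih ((⟨(i, j), hij⟩ : BraidIdx n) ::ₘ ⟨(j, k), hjk⟩ ::ₘ t) (by
            have hw : wt n ((⟨(i, j), hij⟩ : BraidIdx n) ::ₘ
                (⟨(j, k), hjk⟩ : BraidIdx n) ::ₘ t) = n + j.val + 1 +
                wt n ((⟨(j, k), hjk⟩ : BraidIdx n) ::ₘ t) := wt_cons n _ _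
            omega)
          have m2 := ih ((⟨(i, j), hij⟩ : BraidIdx n) ::ₘ
              ⟨(i, k), lt_trans hij hjk⟩ ::ₘ t) (by
            have hw : wt n ((⟨(i, j), hij⟩ : BraidIdx n) ::ₘ
                (⟨(i, k), lt_trans hij hjk⟩ : BraidIdx n) ::ₘ t) = n + j.val + 1 +
                wt n ((⟨(i, k), lt_trans hij hjk⟩ : BraidIdx n) ::ₘ t) := wt_cons n _ _
            have hw' : wt n ((⟨(i, k), lt_trans hij hjk⟩ : BraidIdx n) ::ₘ t)
                = n + k.val + 1 + wt n t := wt_cons n _ _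
            omega)
          exact sub_mem m1 m2
        rcases lt_or_gt_of_ne hfst with hlt | hlt
        · exact main p.1.1 q.1.1 p.1.2 hlt (htop ▸ q.2)
            (by convert hp using 2) (by convert hq using 2 <;> rw [htop])
        · exact main q.1.1 p.1.1 p.1.2 hlt p.2
            (by convert hq using 2 <;> rw [htop]) (by convert hp using 2)
      · push_neg at h1 h2
        have hnd : s.Nodup := Multiset.nodup_iff_count_le_one.mpr fun p => by
          have := h1 p; omega
        obtain ⟨f, rfl⟩ := exists_nbc n s hnd fun p hp q hq ht =>
          by_contra fun hne => (h2 p q hp hq hne) ht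
        rw [mon_fMs]
        exact Submodule.subset_span ⟨f, rfl⟩

lemma span_nbcFam_top : Submodule.span ℝ (Set.range (nbcFam n)) = ⊤ := by
  refine le_antisymm le_top fun y _ => ?_
  obtain ⟨p, rfl⟩ := Ideal.Quotient.mk_surjective y
  induction p using MvPolynomial.induction_on' with
  | monomial σ a =>
      have : (monomial σ a : E n) = a • mon n σ.toMultiset := by
        rw [mon_toMultiset, smul_monomial, smul_eq_mul, mul_one]
      rw [this, show Ideal.Quotient.mk (braidVGIdeal n) (a • mon n σ.toMultiset)
        = a • mkQ n (mon n σ.toMultiset) from map_smul (Ideal.Quotient.mkₐ ℝ _) a _]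
      exact Submodule.smul_mem _ _ (memQ n _)
  | add p q hp hq =>
      rw [map_add]
      exact add_mem (hp trivial) (hq trivial)

lemma piA_apply (e : E n) (w : Equiv.Perm (Fin n)) :
    piA n e w = (aeval (fun p => xs n p w) : E n →ₐ[ℝ] ℝ) e := by
  have h0 : ((Pi.evalAlgHom ℝ (fun _ : Equiv.Perm (Fin n) => ℝ) w).comp (piA n)) e
      = aeval (fun p => xs n p w) e := by
    rw [piA, comp_aeval]
    rfl
  exact h0

def gw (w : Equiv.Perm (Fin n)) : E n :=
  ∏ p : BraidIdx n, (if w p.1.2 < w p.1.1 then X p else 1 - X p)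

lemma perm_eq (w w' : Equiv.Perm (Fin n))
    (h : ∀ p : BraidIdx n, (w' p.1.2 < w' p.1.1 ↔ w p.1.2 < w p.1.1)) : w' = w := by
  have key : ∀ i j : Fin n, w i < w j → w' i < w' j := by
    intro i j hlt
    rcases lt_trichotomy i j with hij | rfl | hji
    · have hp := h ⟨(i, j), hij⟩
      have h1 : ¬ w' j < w' i := fun hc => absurd (hp.mp hc) (not_lt.mpr hlt.le)
      have hne : w' i ≠ w' j := fun hc => absurd (w'.injective hc) hij.ne
      exact lt_of_le_of_ne (not_lt.mp h1) hne
    · exact absurd hlt (lt_irrefl _)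
    · exact (h ⟨(j, i), hji⟩).mpr hlt
  have hg : StrictMono (fun a => w' (w.symm a)) := by
    intro a b hab
    exact key _ _ (by simpa using hab)
  have hrange : Set.range (fun a => w' (w.symm a)) = Set.range (id : Fin n → Fin n) := by
    rw [Set.range_id]
    exact (w'.surjective.comp w.symm.surjective).range_eq
  haveI hwf : WellFoundedLT (Fin n) := inferInstance
  have hfun := (@StrictMono.range_inj (Fin n) (Fin n) _ _ hwf _ id hg strictMono_id).mp hrange
  apply Equiv.ext
  intro i
  have := congrFun hfun (w i)
  simpa using this

lemma piA_gw (w : Equiv.Perm (Fin n)) : piA n (gw n w) = Pi.single w 1 := by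
  classical
  funext w'
  have hfac : ∀ p : BraidIdx n,
      piA n (if w p.1.2 < w p.1.1 then X p else 1 - X p) w'
        = if w p.1.2 < w p.1.1 then (if w' p.1.2 < w' p.1.1 then (1:ℝ) else 0)
          else 1 - (if w' p.1.2 < w' p.1.1 then (1:ℝ) else 0) := by
    intro p
    by_cases hc : w p.1.2 < w p.1.1
    · simp [hc, piA_X, xs]
    · simp [hc, map_sub, xs]
  rw [gw, map_prod]
  rw [Finset.prod_apply]
  by_cases hw : w' = w
  · subst hw
    have : ∀ p ∈ Finset.univ, piA n (if w' p.1.2 < w' p.1.1 then X p else 1 - X p) w' = 1 := by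
      intro p _
      rw [hfac]
      by_cases hc : w' p.1.2 < w' p.1.1 <;> simp [hc]
    rw [Finset.prod_congr rfl this]
    simp [Pi.single_apply]
  · have hnall : ¬ ∀ p : BraidIdx n, (w' p.1.2 < w' p.1.1 ↔ w p.1.2 < w p.1.1) :=
      fun hall => hw (perm_eq n w w' hall)
    obtain ⟨p₀, hp₀⟩ := not_forall.mp hnall
    rw [Finset.prod_eq_zero (Finset.mem_univ p₀)]
    · simp [Pi.single_apply, hw]
    · rw [hfac]
      by_cases hc : w p₀.1.2 < w p₀.1.1
      · have : ¬ w' p₀.1.2 < w' p₀.1.1 := fun hc' => hp₀ (iff_of_true hc' hc)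
        simp [hc, this]
      · have : w' p₀.1.2 < w' p₀.1.1 := by
          by_contra hc'
          exact hp₀ (iff_of_false hc' hc)
        simp [hc, this]

lemma piA_mem_span (e : E n) : piA n e ∈ Submodule.span ℝ (Set.range (uu n)) := by
  induction e using MvPolynomial.induction_on' with
  | monomial σ a =>
      have : (monomial σ a : E n) = a • mon n σ.toMultiset := by
        rw [mon_toMultiset, smul_monomial, smul_eq_mul, mul_one]
      rw [this, map_smul]
      refine Submodule.smul_mem _ _ ?_
      have := memA n σ.toMultiset
      refine Submodule.span_le.mpr ?_ this
      exact fun z hz => Submodule.subset_span (by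
        obtain ⟨f, _, rfl⟩ := hz
        exact ⟨f, rfl⟩)
  | add p q hp hq =>
      rw [map_add]
      exact add_mem hp hq

lemma span_uu_top : ⊤ ≤ Submodule.span ℝ (Set.range (uu n)) := by
  rw [← (Pi.basisFun ℝ (Equiv.Perm (Fin n))).span_eq]
  refine Submodule.span_le.mpr ?_
  rintro _ ⟨w, rfl⟩
  have hb : (Pi.basisFun ℝ (Equiv.Perm (Fin n))) w = Pi.single w 1 := by
    ext w'
    simp [Pi.basisFun_apply, Pi.single_apply]
  rw [hb, ← piA_gw]
  exact piA_mem_span n _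

lemma cardF : Fintype.card ((j : Fin n) → Option (Fin j.val)) = n.factorial := by
  rw [Fintype.card_pi]
  have : ∀ j : Fin n, Fintype.card (Option (Fin j.val)) = j.val + 1 := by
    intro j; simp
  rw [Finset.prod_congr rfl fun j _ => this j]
  rw [Fin.prod_univ_eq_prod_range (fun i => i + 1) n]
  exact Finset.prod_range_add_one_eq_factorial n

lemma card_eq_finrank :
    Fintype.card ((j : Fin n) → Option (Fin j.val)) = Module.finrank ℝ (A n) := by
  rw [cardF, Module.finrank_fintype_fun_eq_card, Fintype.card_perm, Fintype.card_fin]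

lemma piT_nbc (f : (j : Fin n) → Option (Fin j.val)) :
    piT n (nbcBase n f) = Polynomial.C (uu n f) * Polynomial.X ^ Multiset.card (fMs n f) := by
  rw [← mon_fMs, piT_mon, mon_fMs]
  rfl

lemma coeff_mem (e : E n) (d : ℕ) : (piT n e).coeff d ∈ NN n d := by
  induction e using MvPolynomial.induction_on' with
  | monomial σ a =>
      have h : (monomial σ a : E n) = a • mon n σ.toMultiset := by
        rw [mon_toMultiset, smul_monomial, smul_eq_mul, mul_one]
      rw [h, map_smul, Polynomial.coeff_smul]
      refine Submodule.smul_mem _ _ ?_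
      rw [piT_mon, Polynomial.coeff_C_mul, Polynomial.coeff_X_pow]
      by_cases hd : d = Multiset.card σ.toMultiset
      · rw [if_pos hd, mul_one]
        exact hd ▸ memA n σ.toMultiset
      · rw [if_neg hd, mul_zero]
        exact zero_mem _
  | add p q hp hq =>
      rw [map_add, Polynomial.coeff_add]
      exact add_mem hp hq

lemma piT_ideal {q : E n} (hq : q ∈ braidVGIdeal n) :
    ∃ e : E n, piT n q = Polynomial.X * piT n e := by
  rw [braidVGIdeal] at hq
  refine Submodule.span_induction ?_ ?_ ?_ ?_ hq
  · rintro x (⟨p, rfl⟩ | ⟨i, j, k, hij, hjk, rfl⟩)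
    · refine ⟨X p, ?_⟩
      have h1 : piT n (X p) = Polynomial.C (xs n p) * Polynomial.X := aeval_X _ _
      rw [map_pow, h1]
      have h2 : (Polynomial.C (xs n p) * Polynomial.X) ^ 2
          = Polynomial.C (xs n p * xs n p) * Polynomial.X ^ 2 := by
        rw [Polynomial.C_mul]; ring
      rw [h2, xs_idem]
      ring
    · refine ⟨-(X (⟨(i, k), lt_trans hij hjk⟩ : BraidIdx n)), ?_⟩
      have hx : ∀ p : BraidIdx n, piT n (X p) = Polynomial.C (xs n p) * Polynomial.X :=
        fun p => aeval_X _ _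
      rw [map_sub, map_sub, map_mul, map_mul, map_mul, hx, hx, hx, map_neg, hx]
      have hC := congrArg Polynomial.C (xs_rel n hij hjk)
      simp only [map_sub, map_mul, map_neg] at hC
      linear_combination (Polynomial.X : Polynomial (A n)) ^ 2 * hC
  · exact ⟨0, by simp⟩
  · rintro x y hx hy ⟨ex, hex⟩ ⟨ey, hey⟩
    exact ⟨ex + ey, by rw [map_add, hex, hey, map_add]; ring⟩
  · rintro a x hx ⟨ex, hex⟩
    exact ⟨a * ex, by rw [smul_eq_mul, map_mul, hex, map_mul]; ring⟩

lemma indep : LinearIndependent ℝ (nbcFam n) := by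
  classical
  rw [Fintype.linearIndependent_iff]
  intro g hg f₀
  have hq : (∑ f, g f • nbcBase n f) ∈ braidVGIdeal n := by
    rw [← Ideal.Quotient.eq_zero_iff_mem]
    have h1 : Ideal.Quotient.mk (braidVGIdeal n) (∑ f, g f • nbcBase n f)
        = ∑ f, g f • nbcFam n f := by
      rw [← Ideal.Quotient.mkₐ_eq_mk ℝ, map_sum]
      exact Finset.sum_congr rfl fun f _ => map_smul _ _ _
    rw [h1, hg]
  obtain ⟨e, he⟩ := piT_ideal n hq
  set d := Multiset.card (fMs n f₀) with hd
  let b : Module.Basis _ ℝ (A n) :=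
    basisOfTopLeSpanOfCardEqFinrank (uu n) (span_uu_top n) (card_eq_finrank n)
  have hbc : ∀ f, b f = uu n f := fun f => by
    rw [show ⇑b = uu n from coe_basisOfTopLeSpanOfCardEqFinrank _ _ _]
  set φ : A n →ₗ[ℝ] ℝ := b.coord f₀ with hφ
  have hphiu : ∀ f, φ (uu n f) = if f = f₀ then 1 else 0 := by
    intro f
    rw [← hbc, hφ, Module.Basis.coord_apply, Module.Basis.repr_self, Finsupp.single_apply]
  have hker : ∀ m, m < d → ∀ z ∈ NN n m, φ z = 0 := by
    intro m hm z hz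
    refine (Submodule.span_le.mpr ?_ : NN n m ≤ LinearMap.ker φ) hz
    rintro _ ⟨f, hf, rfl⟩
    have hfne : f ≠ f₀ := by
      intro h
      rw [h] at hf
      simp only [Set.mem_setOf_eq] at hf
      omega
    simp only [SetLike.mem_coe, LinearMap.mem_ker]
    rw [hphiu, if_neg hfne]
  have hLHS : (piT n (∑ f, g f • nbcBase n f)).coeff d
      = ∑ f, g f • (if Multiset.card (fMs n f) = d then uu n f else 0) := by
    rw [map_sum, Polynomial.finset_sum_coeff]
    refine Finset.sum_congr rfl fun f _ => ?_
    rw [map_smul, Polynomial.coeff_smul, piT_nbc, Polynomial.coeff_C_mul,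
      Polynomial.coeff_X_pow]
    congr 1
    by_cases hcd : Multiset.card (fMs n f) = d
    · rw [if_pos hcd, if_pos hcd.symm, mul_one]
    · rw [if_neg (fun h => hcd h.symm), if_neg hcd, mul_zero]
  have hphiL : φ ((piT n (∑ f, g f • nbcBase n f)).coeff d) = g f₀ := by
    rw [hLHS, map_sum, Finset.sum_eq_single f₀]
    · rw [if_pos hd.symm, map_smul, hphiu, if_pos rfl, smul_eq_mul, mul_one]
    · intro f _ hfne
      rw [map_smul]
      by_cases hcd : Multiset.card (fMs n f) = d
      · rw [if_pos hcd, hphiu, if_neg hfne, smul_zero]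
      · rw [if_neg hcd, map_zero, smul_zero]
    · intro h
      exact absurd (Finset.mem_univ f₀) h
  have hphiR : φ ((Polynomial.X * piT n e).coeff d) = 0 := by
    rcases Nat.eq_zero_or_pos d with h0 | hpos
    · rw [h0, Polynomial.mul_coeff_zero, Polynomial.coeff_X_zero, zero_mul, map_zero]
    · obtain ⟨m, hm⟩ := Nat.exists_eq_succ_of_ne_zero (Nat.pos_iff_ne_zero.mp hpos)
      rw [hm, Polynomial.coeff_X_mul]
      exact hker m (by omega) _ (coeff_mem n e m)
  rw [he] at hphiL
  rw [← hphiL, hphiR]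

end BraidVG

/-- The associated graded Varchenko–Gelfand ring of the braid arrangement
`A(Sₙ)` has dimension `n!` over `ℝ`, with basis the nbc-monomials obtained by
taking one element from each of the sets
`{1, e_{12}}, {1, e_{13}, e_{23}}, …, {1, e_{1n}, …, e_{(n−1)n}}`. -/
theorem braid_vg_basis (n : ℕ) :
    LinearIndependent ℝ (nbcFam n) ∧
    Submodule.span ℝ (Set.range (nbcFam n)) = ⊤ ∧
    Module.finrank ℝ (MvPolynomial (BraidIdx n) ℝ ⧸ braidVGIdeal n) = n.factorial := by
  classical
  have hli := BraidVG.indep n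
  have hspan := BraidVG.span_nbcFam_top n
  refine ⟨hli, hspan, ?_⟩
  let B : Module.Basis ((j : Fin n) → Option (Fin j.val)) ℝ
      (MvPolynomial (BraidIdx n) ℝ ⧸ braidVGIdeal n) := Module.Basis.mk hli (by rw [hspan])
  rw [Module.finrank_eq_card_basis B, BraidVG.cardF n]


end
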